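/- Let L be a Latin square of order n, let 1 ≤ m ≤ n, and let R be a set of rows and C a set of columns of L with |R| + |C| = n + m. Then every symbol occurs at least m times among the entries L(r, c) with r ∈ R and c ∈ C (counted with multiplicity over the cells (r, c) ∈ R × C). -/
import Mathlib


/-- A Latin square of order n: each symbol occurs exactly once in every row and
exactly once in every column. -/
def IsLatinSquare {n : ℕ} (L : Fin n → Fin n → Fin n) : Prop :=
  (∀ i : Fin n, Function.Bijective fun c => L i c) ∧
  (∀ c : Fin n, Function.Bijective fun i => L i c)

/-- If R is a set of rows and C a set of columns of a Latin square L of order n with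
|R| + |C| = n + m, where 1 ≤ m ≤ n, then every symbol occurs at least m times among
the cells of R × C. -/
theorem latin_square_submatrix_symbols {n m : ℕ} (hm : 1 ≤ m) (hmn : m ≤ n)
    (L : Fin n → Fin n → Fin n) (hL : IsLatinSquare L)
    (R C : Finset (Fin n)) (hRC : R.card + C.card = n + m) :
    ∀ s : Fin n, m ≤ ((R ×ˢ C).filter fun p => L p.1 p.2 = s).card := by
  intro s
  -- σ r = the unique column c with L r c = s
  let eρ : (r : Fin n) → Fin n ≃ Fin n := fun r => Equiv.ofBijective _ (hL.1 r)
  let σ : Fin n → Fin n := fun r => (eρ r).symm s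
  have hσeq : ∀ r, L r (σ r) = s := fun r => (eρ r).apply_symm_apply s
  have hσspec : ∀ r c, L r c = s ↔ c = σ r := by
    intro r c
    constructor
    · intro h
      have := (hL.1 r).1 (a₁ := c) (a₂ := σ r) (by simp [h, hσeq r])
      exact this
    · rintro rfl; exact hσeq r
  have hσinj : Function.Injective σ := by
    intro r₁ r₂ h
    exact (hL.2 (σ r₁)).1 (a₁ := r₁) (a₂ := r₂)
      (by simpa [h, hσeq r₂] using hσeq r₁)
  have hσbij : Function.Bijective σ := (Finite.injective_iff_bijective).1 hσinj
  let e : Fin n ≃ Fin n := Equiv.ofBijective σ hσbij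
  -- the filtered set is the image of R ∩ e⁻¹(C) under r ↦ (r, σ r)
  let B : Finset (Fin n) := C.map e.symm.toEmbedding
  have hB : ∀ r, r ∈ B ↔ σ r ∈ C := by
    intro r
    simp only [B, Finset.mem_map, Equiv.coe_toEmbedding]
    constructor
    · rintro ⟨c, hc, rfl⟩
      have : σ (e.symm c) = c := e.apply_symm_apply c
      rwa [this]
    · intro h
      exact ⟨σ r, h, e.symm_apply_apply r⟩
  have key : ((R ×ˢ C).filter fun p => L p.1 p.2 = s) =
      (R ∩ B).image fun r => (r, σ r) := by
    ext ⟨r, c⟩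
    simp only [Finset.mem_filter, Finset.mem_product, Finset.mem_image,
      Finset.mem_inter, hB]
    constructor
    · rintro ⟨⟨hr, hc⟩, hs⟩
      have : c = σ r := (hσspec r c).1 hs
      exact ⟨r, ⟨hr, this ▸ hc⟩, by simp [this]⟩
    · rintro ⟨a, ⟨ha, hac⟩, h⟩
      have h1 : a = r := congrArg Prod.fst h
      have h2 : σ a = c := congrArg Prod.snd h
      subst h1; subst h2
      exact ⟨⟨ha, hac⟩, hσeq _⟩
  rw [key, Finset.card_image_of_injective _ (fun a b h => congrArg Prod.fst h)]
  have hunion : (R ∪ B).card ≤ n := by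
    simpa using Finset.card_le_univ (R ∪ B)
  have hcards : (R ∩ B).card + (R ∪ B).card = R.card + B.card :=
    Finset.card_inter_add_card_union R B
  have hBcard : B.card = C.card := Finset.card_map _
  omega
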